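/- A De Morgan function lies in (i) BiLat if and only if it is positive and persistent; (ii) DLat if and only if it is positive, persistent, and preserves B2; (iii) ⟨DLat, n⟩ if and only if it is positive, persistent, and preserves K3; (iv) ⟨DLat, b⟩ if and only if it is positive, persistent, and preserves P3. -/

import Mathlib

set_option autoImplicit false

/-- The four truth values of the Belnap–Dunn logic. -/
inductive DM4 : Type
  | t
  | f
  | n
  | b
deriving DecidableEq

namespace DM4

/-- De Morgan negation. -/
def neg : DM4 → DM4
  | t => f
  | f => t
  | n => n
  | b => b

/-- Conflation. -/
def conf : DM4 → DM4
  | t => t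
  | f => f
  | n => b
  | b => n

/-- Meet in the truth order. -/
def meet : DM4 → DM4 → DM4
  | f, _ => f
  | _, f => f
  | t, y => y
  | x, t => x
  | n, n => n
  | b, b => b
  | n, b => f
  | b, n => f

/-- Join in the truth order. -/
def join : DM4 → DM4 → DM4
  | t, _ => t
  | _, t => t
  | f, y => y
  | x, f => x
  | n, n => n
  | b, b => b
  | n, b => t
  | b, n => t

/-- Meet in the information order (⊗). -/
def imeet : DM4 → DM4 → DM4
  | n, _ => n
  | _, n => n
  | b, y => y
  | x, b => x
  | t, t => t
  | f, f => f
  | t, f => n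
  | f, t => n

/-- Join in the information order (⊕). -/
def ijoin : DM4 → DM4 → DM4
  | b, _ => b
  | _, b => b
  | n, y => y
  | x, n => x
  | t, t => t
  | f, f => f
  | t, f => b
  | f, t => b

/-- The truth order: least element `f`, greatest element `t`, with `n`, `b` incomparable. -/
def tle (x y : DM4) : Prop := x = y ∨ x = f ∨ y = t

/-- The information order: least element `n`, greatest element `b`, with `t`, `f` incomparable. -/
def ile (x y : DM4) : Prop := x = y ∨ x = n ∨ y = b

/-- □: maps t to t and everything else to f. -/
def box : DM4 → DM4
  | t => t
  | _ => f

/-- ◇: maps f to f and everything else to t. -/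
def diamond : DM4 → DM4
  | f => f
  | _ => t

/-- Δ: maps t, b to t and n, f to f. -/
def delta : DM4 → DM4
  | t => t
  | b => t
  | _ => f

/-- ∇: maps t, n to t and b, f to f. -/
def nabla : DM4 → DM4
  | t => t
  | n => t
  | _ => f

/-- id_{b↦n}: maps b to n and fixes t, f, n. -/
def idbn : DM4 → DM4
  | b => n
  | x => x

/-- id_{n↦b}: maps n to b and fixes t, f, b. -/
def idnb : DM4 → DM4
  | n => b
  | x => x

/-- id_{n↦t}: maps n to t and fixes t, f, b. -/
def idnt : DM4 → DM4
  | n => t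
  | x => x

/-- id_{b↦t}: maps b to t and fixes t, f, n. -/
def idbt : DM4 → DM4
  | b => t
  | x => x

/-- t_{n↦n}: maps n to n and everything else to t. -/
def tnn : DM4 → DM4
  | n => n
  | _ => t

/-- t_{b↦b}: maps b to b and everything else to t. -/
def tbb : DM4 → DM4
  | b => b
  | _ => t

/-- The binary function pbp²₁. -/
def pbp1 : DM4 → DM4 → DM4
  | t, t => t | t, f => f | t, n => f | t, b => b
  | f, t => t | f, f => f | f, n => f | f, b => b
  | n, t => t | n, f => f | n, n => n | n, b => b
  | b, t => b | b, f => f | b, n => f | b, b => b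

/-- The binary function pbp²₂. -/
def pbp2 : DM4 → DM4 → DM4
  | t, t => t | t, f => f | t, n => n | t, b => f
  | f, t => t | f, f => f | f, n => n | f, b => f
  | n, t => n | n, f => f | n, n => n | n, b => f
  | b, t => t | b, f => f | b, n => n | b, b => b

/-- The binary function mnh²₁. -/
def mnh1 : DM4 → DM4 → DM4
  | t, t => f | t, f => f | t, n => n | t, b => b
  | f, t => f | f, f => f | f, n => n | f, b => b
  | n, t => f | n, f => f | n, n => n | n, b => f
  | b, t => f | b, f => f | b, n => n | b, b => b

/-- The binary function mnh²₂. -/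
def mnh2 : DM4 → DM4 → DM4
  | t, t => f | t, f => f | t, n => n | t, b => b
  | f, t => f | f, f => f | f, n => n | f, b => b
  | n, t => f | n, f => f | n, n => n | n, b => b
  | b, t => f | b, f => f | b, n => f | b, b => b

/-- The binary function mhnp². -/
def mhnp2 : DM4 → DM4 → DM4
  | t, _ => t
  | f, _ => t
  | n, b => f
  | n, _ => n
  | b, n => f
  | b, _ => b

/-- The binary function mnp²₁. -/
def mnp1 : DM4 → DM4 → DM4
  | t, b => b
  | t, _ => t
  | f, b => b
  | f, _ => t
  | n, b => f
  | n, _ => n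
  | b, n => f
  | b, _ => b

/-- The binary function mnp²₂. -/
def mnp2 : DM4 → DM4 → DM4
  | t, _ => t
  | f, _ => t
  | n, _ => n
  | b, n => f
  | b, _ => b

/-- The binary function mnp²₃. -/
def mnp3 : DM4 → DM4 → DM4
  | t, n => n
  | t, _ => t
  | f, n => n
  | f, _ => t
  | n, b => f
  | n, _ => n
  | b, n => f
  | b, _ => b

/-- The binary function mnp²₄. -/
def mnp4 : DM4 → DM4 → DM4
  | t, _ => t
  | f, _ => t
  | n, b => f
  | n, _ => n
  | b, _ => b

/-- The ternary function mhnp³. -/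
def mhnp3 : DM4 → DM4 → DM4 → DM4
  | _, t, _ => f
  | _, f, _ => f
  | t, n, _ => n
  | f, n, _ => f
  | b, n, _ => f
  | n, n, b => f
  | n, n, _ => n
  | t, b, _ => b
  | f, b, _ => f
  | n, b, _ => f
  | b, b, n => f
  | b, b, _ => b

/-- The set of designated values. -/
def Des : Set DM4 := {t, b}

/-- Designatedness as a Boolean predicate. -/
def des : DM4 → Bool
  | t => true
  | b => true
  | _ => false

/-- The protoimplication →_{t-max}. -/
def tmax (x y : DM4) : DM4 :=
  match des x, des y with
  | true, false => n
  | _, _ => t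

/-- The protoimplication →_{i-max}. -/
def imax (x y : DM4) : DM4 :=
  match des x, des y with
  | true, false => f
  | _, _ => b

/-- The protoimplication ↔_{t-min}. -/
def tmin (x y : DM4) : DM4 := if x = y then b else f

/-- The protoimplication ↔_{i-min}. -/
def imin (x y : DM4) : DM4 := if x = y then t else n

/-- A binary operation is a protoimplication if it satisfies Reflexivity and Modus Ponens
with respect to the designated set {t, b}. -/
def IsProtoimplication (r : DM4 → DM4 → DM4) : Prop :=
  (∀ a : DM4, r a a ∈ Des) ∧ ∀ a c : DM4, a ∈ Des → r a c ∈ Des → c ∈ Des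

/-- `DMFun k` is the type of De Morgan functions of arity `k + 1` (arities are positive). -/
abbrev DMFun (k : ℕ) : Type := (Fin (k + 1) → DM4) → DM4

/-- Membership in the clone generated by the family of operations `S`
(`S k` is the set of generators of arity `k + 1`). -/
inductive InClone (S : ∀ k : ℕ, Set (DMFun k)) : ∀ k : ℕ, DMFun k → Prop
  | base {k : ℕ} {g : DMFun k} : g ∈ S k → InClone S k g
  | proj {k : ℕ} (i : Fin (k + 1)) : InClone S k (fun x => x i)
  | comp {k m : ℕ} {g : DMFun m} {h : Fin (m + 1) → DMFun k} :
      InClone S m g → (∀ i, InClone S k (h i)) →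
      InClone S k (fun x => g (fun i => h i x))

/-- A family of sets of De Morgan functions is a clone if it contains all projections
and is closed under composition. -/
structure IsClone (C : ∀ k : ℕ, Set (DMFun k)) : Prop where
  proj : ∀ (k : ℕ) (i : Fin (k + 1)), (fun x => x i) ∈ C k
  comp : ∀ (k m : ℕ) (g : DMFun m) (h : Fin (m + 1) → DMFun k),
      g ∈ C m → (∀ i, h i ∈ C k) → (fun x => g (fun i => h i x)) ∈ C k

/-- The generating family consisting of a single unary operation. -/
def op1 (g : DM4 → DM4) : ∀ k : ℕ, Set (DMFun k)
  | 0 => {fun x => g (x 0)}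
  | _ + 1 => ∅

/-- The generating family consisting of a single binary operation. -/
def op2 (g : DM4 → DM4 → DM4) : ∀ k : ℕ, Set (DMFun k)
  | 1 => {fun x => g (x 0) (x 1)}
  | _ => ∅

/-- The generating family consisting of a single ternary operation. -/
def op3 (g : DM4 → DM4 → DM4 → DM4) : ∀ k : ℕ, Set (DMFun k)
  | 2 => {fun x => g (x 0) (x 1) (x 2)}
  | _ => ∅

/-- Union of two families of operations. -/
def funion (S T : ∀ k : ℕ, Set (DMFun k)) : ∀ k : ℕ, Set (DMFun k) := fun k => S k ∪ T k

infixr:65 " ⊹ " => funion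

/-- The generators of DLat: ∧, ∨, t, f (constants as unary constant functions). -/
def DLatGen : ∀ k : ℕ, Set (DMFun k) :=
  op2 meet ⊹ op2 join ⊹ op1 (fun _ => t) ⊹ op1 (fun _ => f)

/-- The generators of DMA: ∧, ∨, t, f, −. -/
def DMAGen : ∀ k : ℕ, Set (DMFun k) := DLatGen ⊹ op1 neg

/-- The generators of BiLat: ∧, ∨, t, f, ⊗, ⊕, n, b. -/
def BiLatGen : ∀ k : ℕ, Set (DMFun k) :=
  DLatGen ⊹ op2 imeet ⊹ op2 ijoin ⊹ op1 (fun _ => n) ⊹ op1 (fun _ => b)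

/-- A De Morgan function is harmonious if it commutes with conflation. -/
def Harmonious {k : ℕ} (g : DMFun k) : Prop :=
  ∀ x : Fin (k + 1) → DM4, g (fun i => conf (x i)) = conf (g x)

/-- A De Morgan function is positive if it is monotone in the componentwise truth order. -/
def Positive {k : ℕ} (g : DMFun k) : Prop :=
  ∀ x y : Fin (k + 1) → DM4, (∀ i, tle (x i) (y i)) → tle (g x) (g y)

/-- A De Morgan function is persistent if it is monotone in the componentwise
information order. -/
def Persistent {k : ℕ} (g : DMFun k) : Prop :=
  ∀ x y : Fin (k + 1) → DM4, (∀ i, ile (x i) (y i)) → ile (g x) (g y)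

/-- A De Morgan function preserves a subset X of DM4 if it maps tuples from X into X. -/
def Preserves {k : ℕ} (g : DMFun k) (X : Set DM4) : Prop :=
  ∀ x : Fin (k + 1) → DM4, (∀ i, x i ∈ X) → g x ∈ X

def B2 : Set DM4 := {t, f}
def K3 : Set DM4 := {t, n, f}
def P3 : Set DM4 := {t, b, f}

/-- A unary operation as a De Morgan function. -/
def toF1 (g : DM4 → DM4) : DMFun 0 := fun x => g (x 0)

/-- A binary operation as a De Morgan function. -/
def toF2 (g : DM4 → DM4 → DM4) : DMFun 1 := fun x => g (x 0) (x 1)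

/-- A ternary operation as a De Morgan function. -/
def toF3 (g : DM4 → DM4 → DM4 → DM4) : DMFun 2 := fun x => g (x 0) (x 1) (x 2)

/-- The clone generated by a family of operations, as a family of sets. -/
def CloneOf (S : ∀ k : ℕ, Set (DMFun k)) : ∀ k : ℕ, Set (DMFun k) :=
  fun k => {g | InClone S k g}

/-- Inclusion of families of operations. -/
def CloneLE (C D : ∀ k : ℕ, Set (DMFun k)) : Prop := ∀ k : ℕ, C k ⊆ D k



/-! ### Auxiliary machinery for the characterization theorem -/

instance : Fintype DM4 where
  elems := ⟨[t, f, n, b], by simp⟩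
  complete := fun x => by cases x <;> simp

/-- First Boolean coordinate: "contains true". -/
def bp1 : DM4 → Bool
  | t => true
  | b => true
  | _ => false

/-- Second Boolean coordinate: "contains false". -/
def bp2 : DM4 → Bool
  | f => true
  | b => true
  | _ => false

instance (u v : DM4) : Decidable (tle u v) := by unfold tle; infer_instance
instance (u v : DM4) : Decidable (ile u v) := by unfold ile; infer_instance

lemma eq_of_bp : ∀ u v : DM4, bp1 u = bp1 v → bp2 u = bp2 v → u = v := by decide

lemma bool_ext {a b : Bool} (h1 : a = true → b = true) (h2 : b = true → a = true) : a = b := by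
  revert h1 h2; revert a b; decide

lemma tle_refl : ∀ u, tle u u := by decide
lemma ile_refl : ∀ u, ile u u := by decide
lemma bp1_mono_tle : ∀ u v, tle u v → bp1 u = true → bp1 v = true := by decide
lemma bp1_mono_ile : ∀ u v, ile u v → bp1 u = true → bp1 v = true := by decide
lemma bp2_anti_tle : ∀ u v, tle u v → bp2 v = true → bp2 u = true := by decide
lemma bp2_mono_ile : ∀ u v, ile u v → bp2 u = true → bp2 v = true := by decide
lemma bp1_meet : ∀ u v, bp1 (meet u v) = (bp1 u && bp1 v) := by decide
lemma bp2_meet : ∀ u v, bp2 (meet u v) = (bp2 u || bp2 v) := by decide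
lemma bp1_join : ∀ u v, bp1 (join u v) = (bp1 u || bp1 v) := by decide
lemma bp2_join : ∀ u v, bp2 (join u v) = (bp2 u && bp2 v) := by decide

lemma key_bp1 : ∀ u w : DM4, bp1 u = bp1 w →
    u = w ∨ (ile u w ∧ tle w u) ∨ (ile w u ∧ tle u w) := by decide
lemma key_bp2 : ∀ u w : DM4, bp2 u = bp2 w →
    u = w ∨ (ile u w ∧ tle u w) ∨ (ile w u ∧ tle w u) := by decide

section Invariance

variable {k : ℕ} {g : DMFun k}

lemma update_tle (x : Fin (k+1) → DM4) (j : Fin (k+1)) {a v : DM4} (h : tle a v) :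
    ∀ i, tle (Function.update x j a i) (Function.update x j v i) := by
  intro i
  rcases eq_or_ne i j with rfl | hne
  · simpa using h
  · simp only [Function.update_of_ne hne]; exact tle_refl _

lemma update_ile (x : Fin (k+1) → DM4) (j : Fin (k+1)) {a v : DM4} (h : ile a v) :
    ∀ i, ile (Function.update x j a i) (Function.update x j v i) := by
  intro i
  rcases eq_or_ne i j with rfl | hne
  · simpa using h
  · simp only [Function.update_of_ne hne]; exact ile_refl _

lemma inv_gen (p : DM4 → Bool)
    (step : ∀ (x : Fin (k+1) → DM4) (j : Fin (k+1)) (v : DM4), p v = p (x j) →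
      p (g (Function.update x j v)) = p (g x)) :
    ∀ x y, (∀ i, p (x i) = p (y i)) → p (g x) = p (g y) := by
  suffices H : ∀ s : Finset (Fin (k+1)), ∀ x y : Fin (k+1) → DM4,
      (∀ i, p (x i) = p (y i)) → (∀ i, i ∉ s → x i = y i) → p (g x) = p (g y) by
    intro x y h
    exact H Finset.univ x y h (fun i hi => (hi (Finset.mem_univ i)).elim)
  intro s
  induction s using Finset.induction_on with
  | empty =>
    intro x y h h0
    have : x = y := funext fun i => h0 i (Finset.notMem_empty i)
    rw [this]
  | @insert a s ha IH =>
    intro x y h h0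
    have e1 : p (g (Function.update x a (y a))) = p (g x) := step x a (y a) (h a).symm
    rw [← e1]
    apply IH
    · intro i
      rcases eq_or_ne i a with rfl | hne
      · simp
      · simp only [Function.update_of_ne hne]; exact h i
    · intro i hi
      rcases eq_or_ne i a with rfl | hne
      · simp
      · simp only [Function.update_of_ne hne]
        exact h0 i (by simp [Finset.mem_insert, hne, hi])

lemma step_bp1 (pos : Positive g) (pers : Persistent g) :
    ∀ (x : Fin (k+1) → DM4) (j : Fin (k+1)) (v : DM4), bp1 v = bp1 (x j) →
      bp1 (g (Function.update x j v)) = bp1 (g x) := by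
  intro x j v hv
  rcases key_bp1 v (x j) hv with hvw | ⟨h1, h2⟩ | ⟨h1, h2⟩
  · rw [hvw, Function.update_eq_self]
  · -- ile v (x j), tle (x j) v
    have A : ile (g (Function.update x j v)) (g x) := by
      have := pers (Function.update x j v) (Function.update x j (x j)) (update_ile x j h1)
      rwa [Function.update_eq_self] at this
    have B : tle (g x) (g (Function.update x j v)) := by
      have := pos (Function.update x j (x j)) (Function.update x j v) (update_tle x j h2)
      rwa [Function.update_eq_self] at this
    exact bool_ext (bp1_mono_ile _ _ A) (bp1_mono_tle _ _ B)
  · -- ile (x j) v, tle v (x j)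
    have A : ile (g x) (g (Function.update x j v)) := by
      have := pers (Function.update x j (x j)) (Function.update x j v) (update_ile x j h1)
      rwa [Function.update_eq_self] at this
    have B : tle (g (Function.update x j v)) (g x) := by
      have := pos (Function.update x j v) (Function.update x j (x j)) (update_tle x j h2)
      rwa [Function.update_eq_self] at this
    exact bool_ext (bp1_mono_tle _ _ B) (bp1_mono_ile _ _ A)

lemma step_bp2 (pos : Positive g) (pers : Persistent g) :
    ∀ (x : Fin (k+1) → DM4) (j : Fin (k+1)) (v : DM4), bp2 v = bp2 (x j) →
      bp2 (g (Function.update x j v)) = bp2 (g x) := by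
  intro x j v hv
  rcases key_bp2 v (x j) hv with hvw | ⟨h1, h2⟩ | ⟨h1, h2⟩
  · rw [hvw, Function.update_eq_self]
  · -- ile v (x j), tle v (x j)
    have A : ile (g (Function.update x j v)) (g x) := by
      have := pers (Function.update x j v) (Function.update x j (x j)) (update_ile x j h1)
      rwa [Function.update_eq_self] at this
    have B : tle (g (Function.update x j v)) (g x) := by
      have := pos (Function.update x j v) (Function.update x j (x j)) (update_tle x j h2)
      rwa [Function.update_eq_self] at this
    exact bool_ext (bp2_mono_ile _ _ A) (bp2_anti_tle _ _ B)
  · have A : ile (g x) (g (Function.update x j v)) := by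
      have := pers (Function.update x j (x j)) (Function.update x j v) (update_ile x j h1)
      rwa [Function.update_eq_self] at this
    have B : tle (g x) (g (Function.update x j v)) := by
      have := pos (Function.update x j (x j)) (Function.update x j v) (update_tle x j h2)
      rwa [Function.update_eq_self] at this
    exact bool_ext (bp2_anti_tle _ _ B) (bp2_mono_ile _ _ A)

end Invariance

/-! ### Boolean components of a De Morgan function -/

/-- First Boolean component of `g`. -/
def bH1 {k : ℕ} (g : DMFun k) : (Fin (k+1) → Bool) → Bool :=
  fun A => bp1 (g (fun i => if A i then t else f))

/-- Second Boolean component of `g`. -/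
def bH2 {k : ℕ} (g : DMFun k) : (Fin (k+1) → Bool) → Bool :=
  fun C => bp2 (g (fun i => if C i then f else t))

/-- Dual of the first component. -/
def bH1d {k : ℕ} (g : DMFun k) : (Fin (k+1) → Bool) → Bool :=
  fun C => !(bH1 g (fun i => !(C i)))

/-- Dual of the second component. -/
def bH2d {k : ℕ} (g : DMFun k) : (Fin (k+1) → Bool) → Bool :=
  fun A => !(bH2 g (fun i => !(A i)))

/-- Boolean monotonicity. -/
def BMono {k : ℕ} (h : (Fin (k+1) → Bool) → Bool) : Prop :=
  ∀ A B, (∀ i, A i = true → B i = true) → h A = true → h B = true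

section Components

variable {k : ℕ} {g : DMFun k}

lemma bp1_eq_bH1 (pos : Positive g) (pers : Persistent g) (x : Fin (k+1) → DM4) :
    bp1 (g x) = bH1 g (fun i => bp1 (x i)) := by
  apply inv_gen bp1 (step_bp1 pos pers)
  intro i
  show bp1 (x i) = bp1 (if bp1 (x i) = true then t else f)
  cases h : bp1 (x i) <;> rfl

lemma bp2_eq_bH2 (pos : Positive g) (pers : Persistent g) (x : Fin (k+1) → DM4) :
    bp2 (g x) = bH2 g (fun i => bp2 (x i)) := by
  apply inv_gen bp2 (step_bp2 pos pers)
  intro i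
  show bp2 (x i) = bp2 (if bp2 (x i) = true then f else t)
  cases h : bp2 (x i) <;> rfl

lemma tle_ite {A B : Bool} (h : A = true → B = true) :
    tle (if A then t else f) (if B then t else f) := by
  cases A with
  | true => rw [h rfl]; exact tle_refl _
  | false =>
    cases B
    · exact tle_refl _
    · exact Or.inr (Or.inl rfl)

lemma tle_ite' {A B : Bool} (h : A = true → B = true) :
    tle (if B then f else t) (if A then f else t) := by
  cases A with
  | true => rw [h rfl]; exact tle_refl _
  | false =>
    cases B
    · exact tle_refl _
    · exact Or.inr (Or.inl rfl)

lemma bH1_mono (pos : Positive g) : BMono (bH1 g) := by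
  intro A B hAB hA
  refine bp1_mono_tle _ _ (pos _ _ (fun i => tle_ite (hAB i))) hA

lemma bH2_mono (pos : Positive g) : BMono (bH2 g) := by
  intro A B hAB hA
  exact bp2_anti_tle _ _ (pos _ _ (fun i => tle_ite' (hAB i))) hA

lemma BMono_dual {h : (Fin (k+1) → Bool) → Bool} (hm : BMono h) :
    BMono (fun A => !(h (fun i => !(A i)))) := by
  intro A B hAB hA
  have hA' : (!(h (fun i => !(A i)))) = true := hA
  show (!(h (fun i => !(B i)))) = true
  simp only [Bool.not_eq_true'] at hA' ⊢
  cases hB : h (fun i => !(B i)) with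
  | false => rfl
  | true =>
    have step : ∀ i, (!(B i)) = true → (!(A i)) = true := by
      intro i hBi
      simp only [Bool.not_eq_true'] at hBi ⊢
      cases hAi : A i
      · rfl
      · rw [hAB i hAi] at hBi; exact hBi
    simp [hm _ _ step hB] at hA'

lemma bH1d_mono (pos : Positive g) : BMono (bH1d g) := BMono_dual (bH1_mono pos)
lemma bH2d_mono (pos : Positive g) : BMono (bH2d g) := BMono_dual (bH2_mono pos)

end Components

/-! ### DNF terms -/

section DNF

variable {k : ℕ}

noncomputable def meetList (l : List (Fin (k+1))) : DMFun k :=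
  l.foldr (fun i F => fun x => meet (x i) (F x)) (fun _ => t)

noncomputable def joinList (l : List (DMFun k)) : DMFun k :=
  l.foldr (fun G F => fun x => join (G x) (F x)) (fun _ => f)

noncomputable def andT (a : Fin (k+1) → Bool) : DMFun k :=
  meetList ((List.finRange (k+1)).filter (fun i => a i))

noncomputable def dnf (h : (Fin (k+1) → Bool) → Bool) : DMFun k :=
  joinList (((Finset.univ : Finset (Fin (k+1) → Bool)).toList.filter h).map andT)

lemma bp1_meetList (l : List (Fin (k+1))) (x : Fin (k+1) → DM4) :
    bp1 (meetList l x) = l.all (fun i => bp1 (x i)) := by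
  induction l with
  | nil => rfl
  | cons i l ih =>
    show bp1 (meet (x i) (meetList l x)) = _
    rw [bp1_meet, ih, List.all_cons]

lemma bp2_meetList (l : List (Fin (k+1))) (x : Fin (k+1) → DM4) :
    bp2 (meetList l x) = l.any (fun i => bp2 (x i)) := by
  induction l with
  | nil => rfl
  | cons i l ih =>
    show bp2 (meet (x i) (meetList l x)) = _
    rw [bp2_meet, ih, List.any_cons]

lemma bp1_joinList (l : List (DMFun k)) (x : Fin (k+1) → DM4) :
    bp1 (joinList l x) = l.any (fun G => bp1 (G x)) := by
  induction l with
  | nil => rfl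
  | cons G l ih =>
    show bp1 (join (G x) (joinList l x)) = _
    rw [bp1_join, ih, List.any_cons]

lemma bp2_joinList (l : List (DMFun k)) (x : Fin (k+1) → DM4) :
    bp2 (joinList l x) = l.all (fun G => bp2 (G x)) := by
  induction l with
  | nil => rfl
  | cons G l ih =>
    show bp2 (join (G x) (joinList l x)) = _
    rw [bp2_join, ih, List.all_cons]

lemma bp1_andT (a : Fin (k+1) → Bool) (x : Fin (k+1) → DM4) :
    bp1 (andT a x) = true ↔ ∀ i, a i = true → bp1 (x i) = true := by
  rw [andT, bp1_meetList, List.all_eq_true]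
  constructor
  · intro h i hi
    exact h i (List.mem_filter.mpr ⟨List.mem_finRange i, hi⟩)
  · intro h i hi
    exact h i (List.mem_filter.mp hi).2

lemma bp2_andT (a : Fin (k+1) → Bool) (x : Fin (k+1) → DM4) :
    bp2 (andT a x) = true ↔ ∃ i, a i = true ∧ bp2 (x i) = true := by
  rw [andT, bp2_meetList, List.any_eq_true]
  constructor
  · rintro ⟨i, hi, hp⟩
    exact ⟨i, (List.mem_filter.mp hi).2, hp⟩
  · rintro ⟨i, hi, hp⟩
    exact ⟨i, List.mem_filter.mpr ⟨List.mem_finRange i, hi⟩, hp⟩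

lemma bp1_dnf {h : (Fin (k+1) → Bool) → Bool} (hm : BMono h) (x : Fin (k+1) → DM4) :
    bp1 (dnf h x) = h (fun i => bp1 (x i)) := by
  apply bool_ext
  · intro hh
    rw [dnf, bp1_joinList] at hh
    obtain ⟨G, hG, hpG⟩ := List.any_eq_true.mp hh
    obtain ⟨a, ha, rfl⟩ := List.mem_map.mp hG
    have ha2 := (List.mem_filter.mp ha).2
    exact hm a _ ((bp1_andT a x).mp hpG) ha2
  · intro hh
    rw [dnf, bp1_joinList]
    apply List.any_eq_true.mpr
    refine ⟨andT (fun i => bp1 (x i)), List.mem_map.mpr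
      ⟨_, List.mem_filter.mpr ⟨by simp [Finset.mem_toList], hh⟩, rfl⟩, ?_⟩
    exact (bp1_andT _ x).mpr (fun i hi => hi)

lemma bp2_dnf {h : (Fin (k+1) → Bool) → Bool} (hm : BMono h) (x : Fin (k+1) → DM4) :
    bp2 (dnf h x) = !(h (fun i => !(bp2 (x i)))) := by
  apply bool_ext
  · intro hh
    rw [dnf, bp2_joinList] at hh
    simp only [Bool.not_eq_true']
    cases hc : h (fun i => !(bp2 (x i))) with
    | false => rfl
    | true =>
      exfalso
      have hmem : andT (fun i => !(bp2 (x i))) ∈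
          (((Finset.univ : Finset (Fin (k+1) → Bool)).toList.filter h).map andT) :=
        List.mem_map.mpr ⟨_, List.mem_filter.mpr ⟨by simp [Finset.mem_toList], hc⟩, rfl⟩
      have := List.all_eq_true.mp hh _ hmem
      obtain ⟨i, hi, hp⟩ := (bp2_andT _ x).mp this
      rw [hp] at hi
      simp at hi
  · intro hh
    rw [dnf, bp2_joinList]
    apply List.all_eq_true.mpr
    intro G hG
    obtain ⟨a, ha, rfl⟩ := List.mem_map.mp hG
    apply (bp2_andT a x).mpr
    by_contra hcon
    push_neg at hcon
    have hle : ∀ i, a i = true → (!(bp2 (x i))) = true := by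
      intro i hi
      cases hp : bp2 (x i)
      · rfl
      · exact absurd hp (hcon i hi)
    have := hm a _ hle (List.mem_filter.mp ha).2
    rw [this] at hh
    simp at hh

end DNF

/-! ### Clone machinery -/

section CloneBasics

variable {S : ∀ n : ℕ, Set (DMFun n)} {k : ℕ}

lemma clone_ext {F G : DMFun k} (h : InClone S k F) (e : ∀ x, F x = G x) :
    InClone S k G := by
  have : F = G := funext e
  exact this ▸ h

lemma clone_const {c : DM4} (hc : InClone S 0 (toF1 (fun _ => c))) :
    InClone S k (fun _ => c) := by
  have h2 := InClone.comp (k := k) (m := 0) hc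
    (h := fun _ => fun x => x 0) (fun _ => InClone.proj 0)
  exact clone_ext h2 (fun x => rfl)

lemma clone_op2 {op : DM4 → DM4 → DM4} (hop : InClone S 1 (toF2 op))
    {F G : DMFun k} (hF : InClone S k F) (hG : InClone S k G) :
    InClone S k (fun x => op (F x) (G x)) := by
  have h2 := InClone.comp (k := k) (m := 1) hop
    (h := fun i => if i = 0 then F else G)
    (fun i => by
      by_cases hi : i = 0
      · simp only [hi, if_pos]; exact hF
      · simp only [if_neg hi]; exact hG)
  refine clone_ext h2 (fun x => ?_)
  show op ((if (0 : Fin 2) = 0 then F else G) x) ((if (1 : Fin 2) = 0 then F else G) x)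
    = op (F x) (G x)
  norm_num

lemma clone_meetList (hmeet : InClone S 1 (toF2 meet)) (ht : InClone S k (fun _ => t))
    (l : List (Fin (k+1))) : InClone S k (meetList l) := by
  induction l with
  | nil => exact ht
  | cons i l ih =>
    have : InClone S k (fun x => meet (x i) (meetList l x)) :=
      clone_op2 hmeet (InClone.proj i) ih
    exact this

lemma clone_joinList (hjoin : InClone S 1 (toF2 join)) (hf : InClone S k (fun _ => f))
    (l : List (DMFun k)) (hl : ∀ G ∈ l, InClone S k G) : InClone S k (joinList l) := by
  induction l with
  | nil => exact hf
  | cons G l ih =>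
    have : InClone S k (fun x => join (G x) (joinList l x)) :=
      clone_op2 hjoin (hl G List.mem_cons_self) (ih (fun G' hG' => hl G' (List.mem_cons_of_mem _ hG')))
    exact this

lemma clone_dnf (hmeet : InClone S 1 (toF2 meet)) (hjoin : InClone S 1 (toF2 join))
    (ht : InClone S k (fun _ => t)) (hf : InClone S k (fun _ => f))
    (h : (Fin (k+1) → Bool) → Bool) : InClone S k (dnf h) := by
  apply clone_joinList hjoin hf
  intro G hG
  obtain ⟨a, _, rfl⟩ := List.mem_map.mp hG
  exact clone_meetList hmeet ht _

end CloneBasics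

/-! ### Generator membership -/

lemma mem_meet_DLat : InClone DLatGen 1 (toF2 meet) := InClone.base (Or.inl rfl)
lemma mem_join_DLat : InClone DLatGen 1 (toF2 join) := InClone.base (Or.inr (Or.inl rfl))
lemma mem_t_DLat : InClone DLatGen 0 (toF1 (fun _ => t)) :=
  InClone.base (Or.inr (Or.inr (Or.inl rfl)))
lemma mem_f_DLat : InClone DLatGen 0 (toF1 (fun _ => f)) :=
  InClone.base (Or.inr (Or.inr (Or.inr rfl)))

/-- Monotonicity of clone generation. -/
lemma clone_mono {S T : ∀ n : ℕ, Set (DMFun n)} (hST : ∀ n, S n ⊆ T n) {k : ℕ}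
    {g : DMFun k} (h : InClone S k g) : InClone T k g := by
  induction h with
  | base hg => exact InClone.base (hST _ hg)
  | proj i => exact InClone.proj i
  | comp hg hh ihg ihh => exact InClone.comp ihg ihh

lemma DLat_le_left {T : ∀ n : ℕ, Set (DMFun n)} : ∀ n, DLatGen n ⊆ (DLatGen ⊹ T) n :=
  fun n _ hg => Or.inl hg

lemma mem_n_K : InClone (DLatGen ⊹ op1 (fun _ => n)) 0 (toF1 (fun _ => n)) :=
  InClone.base (Or.inr rfl)
lemma mem_b_P : InClone (DLatGen ⊹ op1 (fun _ => b)) 0 (toF1 (fun _ => b)) :=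
  InClone.base (Or.inr rfl)
lemma mem_n_BiLat : InClone BiLatGen 0 (toF1 (fun _ => n)) :=
  InClone.base (Or.inr (Or.inr (Or.inr (Or.inl rfl))))
lemma mem_b_BiLat : InClone BiLatGen 0 (toF1 (fun _ => b)) :=
  InClone.base (Or.inr (Or.inr (Or.inr (Or.inr rfl))))

/-! ### Soundness: everything in the clones is positive/persistent/preserving -/

section Soundness

variable {S : ∀ n : ℕ, Set (DMFun n)}

lemma clone_sound {P : ∀ n, DMFun n → Prop}
    (hproj : ∀ n (i : Fin (n+1)), P n (fun x => x i))
    (hcomp : ∀ (n m : ℕ) (G : DMFun m) (H : Fin (m+1) → DMFun n),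
      P m G → (∀ i, P n (H i)) → P n (fun x => G (fun i => H i x)))
    (hbase : ∀ n F, F ∈ S n → P n F) {k : ℕ} {g : DMFun k}
    (h : InClone S k g) : P k g := by
  induction h with
  | base hg => exact hbase _ _ hg
  | proj i => exact hproj _ i
  | comp hg hh ihg ihh => exact hcomp _ _ _ _ ihg ihh

lemma sound_pos (hbase : ∀ n F, F ∈ S n → Positive F) {k : ℕ} {g : DMFun k}
    (h : InClone S k g) : Positive g :=
  clone_sound (P := fun n F => Positive F) (fun _ i x y hxy => hxy i)
    (fun _ _ G H hG hH x y hxy => hG _ _ (fun i => hH i x y hxy)) hbase h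

lemma sound_pers (hbase : ∀ n F, F ∈ S n → Persistent F) {k : ℕ} {g : DMFun k}
    (h : InClone S k g) : Persistent g :=
  clone_sound (P := fun n F => Persistent F) (fun _ i x y hxy => hxy i)
    (fun _ _ G H hG hH x y hxy => hG _ _ (fun i => hH i x y hxy)) hbase h

lemma sound_pres {X : Set DM4} (hbase : ∀ n F, F ∈ S n → Preserves F X) {k : ℕ}
    {g : DMFun k} (h : InClone S k g) : Preserves g X :=
  clone_sound (P := fun n F => Preserves F X) (fun _ i x hx => hx i)
    (fun _ _ G H hG hH x hx => hG _ (fun i => hH i x hx)) hbase h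

end Soundness

section Elims

variable {P : ∀ n, DMFun n → Prop}

lemma op1_elim {u : DM4 → DM4} (h0 : P 0 (toF1 u)) :
    ∀ n F, F ∈ op1 u n → P n F := by
  intro n F h
  match n with
  | 0 =>
    obtain rfl : F = toF1 u := h
    exact h0
  | n+1 => exact h.elim

lemma op2_elim {u : DM4 → DM4 → DM4} (h0 : P 1 (toF2 u)) :
    ∀ n F, F ∈ op2 u n → P n F := by
  intro n F h
  match n with
  | 0 => exact h.elim
  | 1 =>
    obtain rfl : F = toF2 u := h
    exact h0
  | n+2 => exact h.elim

lemma funion_elim {S T : ∀ n : ℕ, Set (DMFun n)}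
    (hS : ∀ n F, F ∈ S n → P n F) (hT : ∀ n F, F ∈ T n → P n F) :
    ∀ n F, F ∈ (S ⊹ T) n → P n F :=
  fun n F h => h.elim (hS n F) (hT n F)

lemma DLatGen_elim (hm : P 1 (toF2 meet)) (hj : P 1 (toF2 join))
    (ht : P 0 (toF1 fun _ => t)) (hf : P 0 (toF1 fun _ => f)) :
    ∀ n F, F ∈ DLatGen n → P n F :=
  funion_elim (op2_elim hm)
    (funion_elim (op2_elim hj) (funion_elim (op1_elim ht) (op1_elim hf)))

lemma BiLatGen_elim (hm : P 1 (toF2 meet)) (hj : P 1 (toF2 join))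
    (ht : P 0 (toF1 fun _ => t)) (hf : P 0 (toF1 fun _ => f))
    (him : P 1 (toF2 imeet)) (hij : P 1 (toF2 ijoin))
    (hn : P 0 (toF1 fun _ => n)) (hb : P 0 (toF1 fun _ => b)) :
    ∀ n F, F ∈ BiLatGen n → P n F :=
  funion_elim (DLatGen_elim hm hj ht hf)
    (funion_elim (op2_elim him)
      (funion_elim (op2_elim hij) (funion_elim (op1_elim hn) (op1_elim hb))))

end Elims

section ConcreteProps

lemma pos2 {op : DM4 → DM4 → DM4}
    (h : ∀ a b c d, tle a c → tle b d → tle (op a b) (op c d)) : Positive (toF2 op) :=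
  fun x y hxy => h _ _ _ _ (hxy 0) (hxy 1)

lemma pers2 {op : DM4 → DM4 → DM4}
    (h : ∀ a b c d, ile a c → ile b d → ile (op a b) (op c d)) : Persistent (toF2 op) :=
  fun x y hxy => h _ _ _ _ (hxy 0) (hxy 1)

lemma pos1 {u : DM4 → DM4} (h : ∀ a c, tle a c → tle (u a) (u c)) : Positive (toF1 u) :=
  fun x y hxy => h _ _ (hxy 0)

lemma pers1 {u : DM4 → DM4} (h : ∀ a c, ile a c → ile (u a) (u c)) : Persistent (toF1 u) :=
  fun x y hxy => h _ _ (hxy 0)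

lemma pres2 {op : DM4 → DM4 → DM4} {X : Set DM4}
    (h : ∀ a b, a ∈ X → b ∈ X → op a b ∈ X) : Preserves (toF2 op) X :=
  fun x hx => h _ _ (hx 0) (hx 1)

lemma pres1 {u : DM4 → DM4} {X : Set DM4} (h : ∀ a, a ∈ X → u a ∈ X) :
    Preserves (toF1 u) X :=
  fun x hx => h _ (hx 0)

lemma mem_B2 {u : DM4} : u ∈ B2 ↔ u = t ∨ u = f := Iff.rfl
lemma mem_K3 {u : DM4} : u ∈ K3 ↔ u = t ∨ u = n ∨ u = f := Iff.rfl
lemma mem_P3 {u : DM4} : u ∈ P3 ↔ u = t ∨ u = b ∨ u = f := Iff.rfl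

lemma forward_pos_pers {k : ℕ} {g : DMFun k} (h : InClone BiLatGen k g) :
    Positive g ∧ Persistent g := by
  constructor
  · refine sound_pos ?_ h
    refine BiLatGen_elim ?_ ?_ ?_ ?_ ?_ ?_ ?_ ?_
    · exact pos2 (by decide)
    · exact pos2 (by decide)
    · exact pos1 (by decide)
    · exact pos1 (by decide)
    · exact pos2 (by decide)
    · exact pos2 (by decide)
    · exact pos1 (by decide)
    · exact pos1 (by decide)
  · refine sound_pers ?_ h
    refine BiLatGen_elim ?_ ?_ ?_ ?_ ?_ ?_ ?_ ?_
    · exact pers2 (by decide)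
    · exact pers2 (by decide)
    · exact pers1 (by decide)
    · exact pers1 (by decide)
    · exact pers2 (by decide)
    · exact pers2 (by decide)
    · exact pers1 (by decide)
    · exact pers1 (by decide)

lemma DLat_le_BiLat : ∀ n, DLatGen n ⊆ BiLatGen n := fun _ _ hg => Or.inl hg

lemma K_le_BiLat : ∀ m, (DLatGen ⊹ op1 (fun _ => n)) m ⊆ BiLatGen m := by
  intro m F h
  rcases h with h | h
  · exact Or.inl h
  · exact Or.inr (Or.inr (Or.inr (Or.inl h)))

lemma P_le_BiLat : ∀ m, (DLatGen ⊹ op1 (fun _ => b)) m ⊆ BiLatGen m := by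
  intro m F h
  rcases h with h | h
  · exact Or.inl h
  · exact Or.inr (Or.inr (Or.inr (Or.inr h)))

lemma DLat_pres {X : Set DM4}
    (hm : ∀ a b, a ∈ X → b ∈ X → meet a b ∈ X)
    (hj : ∀ a b, a ∈ X → b ∈ X → join a b ∈ X)
    (ht : t ∈ X) (hf : f ∈ X) {k : ℕ} {g : DMFun k}
    (h : InClone DLatGen k g) : Preserves g X :=
  sound_pres (DLatGen_elim (pres2 hm) (pres2 hj) (pres1 fun _ _ => ht)
    (pres1 fun _ _ => hf)) h

lemma meet_B2 : ∀ u v : DM4, (u = t ∨ u = f) → (v = t ∨ v = f) →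
    (meet u v = t ∨ meet u v = f) := by decide
lemma join_B2 : ∀ u v : DM4, (u = t ∨ u = f) → (v = t ∨ v = f) →
    (join u v = t ∨ join u v = f) := by decide
lemma meet_K3 : ∀ u v : DM4, (u = t ∨ u = n ∨ u = f) → (v = t ∨ v = n ∨ v = f) →
    (meet u v = t ∨ meet u v = n ∨ meet u v = f) := by decide
lemma join_K3 : ∀ u v : DM4, (u = t ∨ u = n ∨ u = f) → (v = t ∨ v = n ∨ v = f) →
    (join u v = t ∨ join u v = n ∨ join u v = f) := by decide
lemma meet_P3 : ∀ u v : DM4, (u = t ∨ u = b ∨ u = f) → (v = t ∨ v = b ∨ v = f) →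
    (meet u v = t ∨ meet u v = b ∨ meet u v = f) := by decide
lemma join_P3 : ∀ u v : DM4, (u = t ∨ u = b ∨ u = f) → (v = t ∨ v = b ∨ v = f) →
    (join u v = t ∨ join u v = b ∨ join u v = f) := by decide

end ConcreteProps

/-! ### The representation theorem -/

section Representation

variable {k : ℕ} {g : DMFun k}

lemma represent (pos : Positive g) (pers : Persistent g) (N B : DM4)
    (hN1 : bp1 N = false) (hB1 : bp1 B = true)
    (hcase : ∀ C, ((bH1d g C && (bH2 g C || bp2 N)) || (bH2 g C && bp2 B)) = bH2 g C) :
    g = fun x => meet (join (dnf (bH1 g) x) (meet (dnf (bH2d g) x) N))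
      (join (dnf (bH2d g) x) B) := by
  funext x
  apply eq_of_bp
  · simp only [bp1_meet, bp1_join, bp1_dnf (bH1_mono pos), bp1_dnf (bH2d_mono pos),
      hN1, hB1, Bool.and_false, Bool.or_false, Bool.or_true, Bool.and_true]
    exact bp1_eq_bH1 pos pers x
  · have hdd : (!(bH2d g (fun i => !(bp2 (x i))))) = bH2 g (fun i => bp2 (x i)) := by
      show (!(!(bH2 g (fun i => !(!(bp2 (x i))))))) = _
      rw [Bool.not_not]
      congr 1
      funext i
      exact Bool.not_not _
    simp only [bp2_meet, bp2_join, bp2_dnf (bH1_mono pos), bp2_dnf (bH2d_mono pos), hdd]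
    rw [bp2_eq_bH2 pos pers x]
    exact (hcase (fun i => bp2 (x i))).symm

lemma clone_of_rep {S : ∀ m : ℕ, Set (DMFun m)} (pos : Positive g) (pers : Persistent g)
    (hmeet : InClone S 1 (toF2 meet)) (hjoin : InClone S 1 (toF2 join))
    (ht : InClone S 0 (toF1 fun _ => t)) (hf : InClone S 0 (toF1 fun _ => f))
    (N B : DM4) (hN : InClone S 0 (toF1 fun _ => N)) (hB : InClone S 0 (toF1 fun _ => B))
    (hN1 : bp1 N = false) (hB1 : bp1 B = true)
    (hcase : ∀ C, ((bH1d g C && (bH2 g C || bp2 N)) || (bH2 g C && bp2 B)) = bH2 g C) :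
    InClone S k g := by
  rw [represent pos pers N B hN1 hB1 hcase]
  have ct : InClone S k (fun _ => t) := clone_const ht
  have cf : InClone S k (fun _ => f) := clone_const hf
  have cN : InClone S k (fun _ => N) := clone_const hN
  have cB : InClone S k (fun _ => B) := clone_const hB
  have d1 := clone_dnf hmeet hjoin ct cf (bH1 g)
  have d2 := clone_dnf hmeet hjoin ct cf (bH2d g)
  exact clone_op2 hmeet (clone_op2 hjoin d1 (clone_op2 hmeet d2 cN)) (clone_op2 hjoin d2 cB)

/-- The canonical Boolean input associated to `C`. -/
lemma input_eq (C : Fin (k+1) → Bool) :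
    (fun i => if (!(C i)) = true then t else f) = (fun i => if C i = true then f else t) := by
  funext i; cases C i <;> rfl

lemma bH1d_eval (C : Fin (k+1) → Bool) :
    bH1d g C = !(bp1 (g (fun i => if C i = true then f else t))) := by
  show (!(bp1 (g (fun i => if (!(C i)) = true then t else f)))) = _
  rw [input_eq]

lemma case_DLat (hpre : Preserves g B2) :
    ∀ C, bH2 g C = bH1d g C := by
  intro C
  have hg : g (fun i => if C i = true then f else t) ∈ B2 := by
    apply hpre
    intro i
    cases C i
    · exact Or.inl rfl
    · exact Or.inr rfl
  rw [bH1d_eval]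
  show bp2 (g (fun i => if C i = true then f else t)) = _
  rcases mem_B2.mp hg with h | h <;> rw [h] <;> rfl

lemma case_K3 (hpre : Preserves g K3) :
    ∀ C, bH2 g C = true → bH1d g C = true := by
  intro C h2
  have hg : g (fun i => if C i = true then f else t) ∈ K3 := by
    apply hpre
    intro i
    cases C i
    · exact Or.inl rfl
    · exact Or.inr (Or.inr rfl)
  rw [bH1d_eval]
  have h2' : bp2 (g (fun i => if C i = true then f else t)) = true := h2
  rcases mem_K3.mp hg with h | h | h <;> rw [h] <;> rw [h] at h2' <;> first | rfl | exact absurd h2' (by decide)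

lemma case_P3 (hpre : Preserves g P3) :
    ∀ C, bH1d g C = true → bH2 g C = true := by
  intro C h1
  have hg : g (fun i => if C i = true then f else t) ∈ P3 := by
    apply hpre
    intro i
    cases C i
    · exact Or.inl rfl
    · exact Or.inr (Or.inr rfl)
  rw [bH1d_eval] at h1
  show bp2 (g (fun i => if C i = true then f else t)) = true
  rcases mem_P3.mp hg with h | h | h <;> rw [h] <;> rw [h] at h1 <;> first | rfl | exact absurd h1 (by decide)

end Representation

/-! ### Case conditions and assembly -/

section Assembly

variable {k : ℕ} {g : DMFun k}

lemma hcase_BiLat :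
    ∀ C, ((bH1d g C && (bH2 g C || bp2 n)) || (bH2 g C && bp2 b)) = bH2 g C := by
  intro C
  cases h2 : bH2 g C <;> cases h1 : bH1d g C <;> rfl

lemma hcase_DLat (hpre : Preserves g B2) :
    ∀ C, ((bH1d g C && (bH2 g C || bp2 f)) || (bH2 g C && bp2 t)) = bH2 g C := by
  intro C
  rw [case_DLat hpre C]
  cases h1 : bH1d g C <;> rfl

lemma hcase_K3 (hpre : Preserves g K3) :
    ∀ C, ((bH1d g C && (bH2 g C || bp2 n)) || (bH2 g C && bp2 t)) = bH2 g C := by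
  intro C
  cases h2 : bH2 g C
  · cases h1 : bH1d g C <;> rfl
  · rw [case_K3 hpre C h2]; rfl

lemma hcase_P3 (hpre : Preserves g P3) :
    ∀ C, ((bH1d g C && (bH2 g C || bp2 f)) || (bH2 g C && bp2 b)) = bH2 g C := by
  intro C
  cases h1 : bH1d g C
  · cases h2 : bH2 g C <;> rfl
  · rw [case_P3 hpre C h1]; rfl

lemma bwd_BiLat (pos : Positive g) (pers : Persistent g) : InClone BiLatGen k g :=
  clone_of_rep pos pers (clone_mono DLat_le_BiLat mem_meet_DLat)
    (clone_mono DLat_le_BiLat mem_join_DLat) (clone_mono DLat_le_BiLat mem_t_DLat)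
    (clone_mono DLat_le_BiLat mem_f_DLat) n b mem_n_BiLat mem_b_BiLat rfl rfl hcase_BiLat

lemma bwd_DLat (pos : Positive g) (pers : Persistent g) (hpre : Preserves g B2) :
    InClone DLatGen k g :=
  clone_of_rep pos pers mem_meet_DLat mem_join_DLat mem_t_DLat mem_f_DLat f t
    mem_f_DLat mem_t_DLat rfl rfl (hcase_DLat hpre)

lemma bwd_K3 (pos : Positive g) (pers : Persistent g) (hpre : Preserves g K3) :
    InClone (DLatGen ⊹ op1 (fun _ => n)) k g :=
  clone_of_rep pos pers (clone_mono DLat_le_left mem_meet_DLat)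
    (clone_mono DLat_le_left mem_join_DLat) (clone_mono DLat_le_left mem_t_DLat)
    (clone_mono DLat_le_left mem_f_DLat) n t mem_n_K
    (clone_mono DLat_le_left mem_t_DLat) rfl rfl (hcase_K3 hpre)

lemma bwd_P3 (pos : Positive g) (pers : Persistent g) (hpre : Preserves g P3) :
    InClone (DLatGen ⊹ op1 (fun _ => b)) k g :=
  clone_of_rep pos pers (clone_mono DLat_le_left mem_meet_DLat)
    (clone_mono DLat_le_left mem_join_DLat) (clone_mono DLat_le_left mem_t_DLat)
    (clone_mono DLat_le_left mem_f_DLat) f b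
    (clone_mono DLat_le_left mem_f_DLat) mem_b_P rfl rfl (hcase_P3 hpre)

lemma fwd_pres_DLat {X : Set DM4}
    (hm : ∀ u v, u ∈ X → v ∈ X → meet u v ∈ X)
    (hj : ∀ u v, u ∈ X → v ∈ X → join u v ∈ X)
    (ht : t ∈ X) (hf : f ∈ X) :
    ∀ m F, F ∈ DLatGen m → Preserves F X :=
  DLatGen_elim (pres2 hm) (pres2 hj) (pres1 fun _ _ => ht) (pres1 fun _ _ => hf)

end Assembly
/-- Characterization of the positive persistent clones. -/
theorem positive_persistent_clones (k : ℕ) (g : DMFun k) :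
    (InClone BiLatGen k g ↔ Positive g ∧ Persistent g) ∧
    (InClone DLatGen k g ↔ Positive g ∧ Persistent g ∧ Preserves g B2) ∧
    (InClone (DLatGen ⊹ op1 (fun _ => n)) k g ↔
      Positive g ∧ Persistent g ∧ Preserves g K3) ∧
    (InClone (DLatGen ⊹ op1 (fun _ => b)) k g ↔
      Positive g ∧ Persistent g ∧ Preserves g P3) := by
  refine ⟨⟨fun h => forward_pos_pers h, fun ⟨pos, pers⟩ => bwd_BiLat pos pers⟩,
    ⟨fun h => ?_, fun ⟨pos, pers, hpre⟩ => bwd_DLat pos pers hpre⟩,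
    ⟨fun h => ?_, fun ⟨pos, pers, hpre⟩ => bwd_K3 pos pers hpre⟩,
    ⟨fun h => ?_, fun ⟨pos, pers, hpre⟩ => bwd_P3 pos pers hpre⟩⟩
  · obtain ⟨pos, pers⟩ := forward_pos_pers (clone_mono DLat_le_BiLat h)
    refine ⟨pos, pers, ?_⟩
    exact sound_pres (fwd_pres_DLat meet_B2 join_B2 (Or.inl rfl) (Or.inr rfl)) h
  · obtain ⟨pos, pers⟩ := forward_pos_pers (clone_mono K_le_BiLat h)
    refine ⟨pos, pers, ?_⟩
    refine sound_pres ?_ h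
    exact funion_elim (fwd_pres_DLat meet_K3 join_K3 (Or.inl rfl) (Or.inr (Or.inr rfl)))
      (op1_elim (pres1 fun _ _ => Or.inr (Or.inl rfl)))
  · obtain ⟨pos, pers⟩ := forward_pos_pers (clone_mono P_le_BiLat h)
    refine ⟨pos, pers, ?_⟩
    refine sound_pres ?_ h
    exact funion_elim (fwd_pres_DLat meet_P3 join_P3 (Or.inl rfl) (Or.inr (Or.inr rfl)))
      (op1_elim (pres1 fun _ _ => Or.inr (Or.inl rfl)))

end DM4
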